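/- Let n be a natural number, let m₀, m_T : ℕ → ℝ be sequences with m_T(0) = 1 such that the (n+1)×(n+1) Hankel matrix of m_T (with (i,j) entry m_T(i+j)) is positive definite. Let a : ℕ → ℝ be a sequence for which there exists c with 0 < a(k) ≤ c < 1 for all k, and set t_k = ∏_{i=0}^{k−1} a(i). For each k let M_k be the (n+1)×(n+1) matrix whose (0,0) entry is 1 and whose (i,j) entry for (i,j) ≠ (0,0) is m_T(i+j) − t_k^{i+j} · m₀(i+j). Then there exists k₀ ∈ ℕ such that M_{k₀} is positive definite. -/

import Mathlib

open Finset Matrix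

lemma quad_smul {m : ℕ} (H : Matrix (Fin m) (Fin m) ℝ) (c : ℝ) (x : Fin m → ℝ) :
    (c • x) ⬝ᵥ H *ᵥ (c • x) = c ^ 2 * (x ⬝ᵥ H *ᵥ x) := by
  rw [Matrix.mulVec_smul, smul_dotProduct, dotProduct_smul]
  simp [smul_eq_mul]; ring

lemma quad_lower_bound {m : ℕ} (H : Matrix (Fin (m+1)) (Fin (m+1)) ℝ) (hH : H.PosDef) :
    ∃ μ : ℝ, 0 < μ ∧ ∀ x : Fin (m+1) → ℝ, μ * ‖x‖ ^ 2 ≤ x ⬝ᵥ H *ᵥ x := by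
  have hcont : Continuous fun x : Fin (m+1) → ℝ => x ⬝ᵥ H *ᵥ x := by
    simp only [dotProduct, Matrix.mulVec]
    fun_prop
  have hne : (Metric.sphere (0 : Fin (m+1) → ℝ) 1).Nonempty :=
    NormedSpace.sphere_nonempty.mpr zero_le_one
  obtain ⟨x₀, hx₀S, hmin⟩ := (isCompact_sphere (0 : Fin (m+1) → ℝ) 1).exists_isMinOn hne
    hcont.continuousOn
  have hx₀n : ‖x₀‖ = 1 := by simpa using hx₀S
  have hx₀ : x₀ ≠ 0 := by intro h; rw [h] at hx₀n; simp at hx₀n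
  refine ⟨x₀ ⬝ᵥ H *ᵥ x₀, ?_, ?_⟩
  · have := hH.dotProduct_mulVec_pos hx₀
    simpa using this
  · intro x
    rcases eq_or_ne x 0 with rfl | hx
    · simp
    · have hxn : (0:ℝ) < ‖x‖ := norm_pos_iff.mpr hx
      set u : Fin (m+1) → ℝ := ‖x‖⁻¹ • x with hu
      have hun : ‖u‖ = 1 := by
        rw [hu, norm_smul]; simp [abs_of_pos (inv_pos.mpr hxn), inv_mul_cancel₀ hxn.ne']
      have hmem : u ∈ Metric.sphere (0 : Fin (m+1) → ℝ) 1 := by simp [hun]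
      have h1 : x₀ ⬝ᵥ H *ᵥ x₀ ≤ u ⬝ᵥ H *ᵥ u := hmin hmem
      have h3 : u ⬝ᵥ H *ᵥ u = ‖x‖⁻¹ ^ 2 * (x ⬝ᵥ H *ᵥ x) := quad_smul H _ x
      calc (x₀ ⬝ᵥ H *ᵥ x₀) * ‖x‖ ^ 2 ≤ (‖x‖⁻¹ ^ 2 * (x ⬝ᵥ H *ᵥ x)) * ‖x‖ ^ 2 := by
            rw [← h3]; nlinarith
        _ = x ⬝ᵥ H *ᵥ x := by field_simp

lemma quad_bound {m : ℕ} (E : Matrix (Fin m) (Fin m) ℝ) (ε : ℝ)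
    (hε : ∀ i j, |E i j| ≤ ε) (x : Fin m → ℝ) :
    |x ⬝ᵥ E *ᵥ x| ≤ ε * m ^ 2 * ‖x‖ ^ 2 := by
  have hterm : ∀ i j : Fin m, |x i * (E i j * x j)| ≤ ε * ‖x‖ ^ 2 := by
    intro i j
    have hxi : |x i| ≤ ‖x‖ := by simpa [Real.norm_eq_abs] using norm_le_pi_norm x i
    have hxj : |x j| ≤ ‖x‖ := by simpa [Real.norm_eq_abs] using norm_le_pi_norm x j
    have hx0 : (0:ℝ) ≤ ‖x‖ := norm_nonneg x
    calc |x i * (E i j * x j)| = |x i| * |E i j| * |x j| := by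
          rw [abs_mul, abs_mul]; ring
      _ ≤ ‖x‖ * ε * ‖x‖ := by
          have hε0 : 0 ≤ ε := (abs_nonneg _).trans (hε i j)
          gcongr
          exact hε i j
      _ = ε * ‖x‖ ^ 2 := by ring
  have h1 : x ⬝ᵥ E *ᵥ x = ∑ i : Fin m, ∑ j : Fin m, x i * (E i j * x j) := by
    simp [dotProduct, Matrix.mulVec, Finset.mul_sum]
  rw [h1]
  calc |∑ i : Fin m, ∑ j : Fin m, x i * (E i j * x j)|
      ≤ ∑ i : Fin m, ∑ j : Fin m, |x i * (E i j * x j)| := by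
        refine (Finset.abs_sum_le_sum_abs _ _).trans ?_
        exact Finset.sum_le_sum fun i _ => Finset.abs_sum_le_sum_abs _ _
    _ ≤ ∑ _i : Fin m, ∑ _j : Fin m, ε * ‖x‖ ^ 2 :=
        Finset.sum_le_sum fun i _ => Finset.sum_le_sum fun j _ => hterm i j
    _ = ε * m ^ 2 * ‖x‖ ^ 2 := by simp [Finset.sum_const]; ring

/-- If the Hankel matrix of the target moment sequence `mT` (with `mT 0 = 1`)
is positive definite and `0 < a k ≤ c < 1`, then with `t k = ∏_{i<k} a i` there exists a time
`k₀` such that the matrix with `(0,0)` entry `1` and `(i,j)` entry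
`mT (i+j) - t k₀ ^ (i+j) * m₀ (i+j)` otherwise is positive definite. -/
theorem exists_posDef_moment_gap (n : ℕ) (m₀ mT : ℕ → ℝ) (a : ℕ → ℝ)
    (hmT0 : mT 0 = 1)
    (hmT : (Matrix.of fun i j : Fin (n + 1) => mT (i.val + j.val)).PosDef)
    (ha : ∃ c : ℝ, c < 1 ∧ ∀ k, 0 < a k ∧ a k ≤ c) :
    ∃ k₀ : ℕ,
      (Matrix.of fun i j : Fin (n + 1) =>
        if i.val + j.val = 0 then (1 : ℝ)
        else mT (i.val + j.val) -
          (∏ i' ∈ Finset.range k₀, a i') ^ (i.val + j.val) * m₀ (i.val + j.val)).PosDef := by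
  obtain ⟨c, hc1, hac⟩ := ha
  have hc0 : 0 < c := lt_of_lt_of_le (hac 0).1 (hac 0).2
  obtain ⟨μ, hμ, hquad⟩ := quad_lower_bound _ hmT
  set C : ℝ := ∑ s ∈ Finset.range (2 * n + 2), |m₀ s| with hCdef
  have hC0 : 0 ≤ C := Finset.sum_nonneg fun s _ => abs_nonneg _
  have hCb : ∀ i j : Fin (n+1), |m₀ (i.val + j.val)| ≤ C := by
    intro i j
    apply Finset.single_le_sum (f := fun s => |m₀ s|) (fun s _ => abs_nonneg _)
    simp only [Finset.mem_range]
    omega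
  set δ : ℝ := μ / ((C + 1) * ((n:ℝ) + 1) ^ 2) with hδdef
  have hδ0 : 0 < δ := by positivity
  obtain ⟨k₀, hk₀⟩ : ∃ k, c ^ k < δ := by
    have h := tendsto_pow_atTop_nhds_zero_of_lt_one hc0.le hc1
    exact (h.eventually (gt_mem_nhds hδ0)).exists
  refine ⟨k₀, ?_⟩
  set t : ℝ := ∏ i' ∈ Finset.range k₀, a i' with htdef
  have ht0 : 0 < t := Finset.prod_pos fun i _ => (hac i).1
  have htc : t ≤ c ^ k₀ := by
    calc t ≤ ∏ _i' ∈ Finset.range k₀, c :=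
          Finset.prod_le_prod (fun i _ => (hac i).1.le) (fun i _ => (hac i).2)
      _ = c ^ k₀ := by simp
  have htδ : t < δ := lt_of_le_of_lt htc hk₀
  have ht1 : t ≤ 1 := htc.trans (pow_le_one₀ hc0.le hc1.le)
  set H : Matrix (Fin (n+1)) (Fin (n+1)) ℝ :=
    Matrix.of (fun i j : Fin (n+1) => mT (i.val + j.val)) with hHdef
  set E : Matrix (Fin (n+1)) (Fin (n+1)) ℝ :=
    Matrix.of (fun i j : Fin (n+1) =>
      if i.val + j.val = 0 then 0 else t ^ (i.val + j.val) * m₀ (i.val + j.val)) with hEdef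
  have hME : (Matrix.of fun i j : Fin (n + 1) =>
      if i.val + j.val = 0 then (1 : ℝ)
      else mT (i.val + j.val) - t ^ (i.val + j.val) * m₀ (i.val + j.val)) = H - E := by
    ext i j
    simp only [hHdef, hEdef, Matrix.sub_apply, Matrix.of_apply]
    by_cases h : i.val + j.val = 0
    · rw [if_pos h, if_pos h, h, hmT0]; ring
    · rw [if_neg h, if_neg h]
  rw [hME]
  have hEb : ∀ i j, |E i j| ≤ t * C := by
    intro i j
    by_cases h : i.val + j.val = 0
    · simp only [hEdef, Matrix.of_apply, if_pos h, abs_zero]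
      positivity
    · have h1 : 1 ≤ i.val + j.val := Nat.one_le_iff_ne_zero.mpr h
      have h2 : t ^ (i.val + j.val) ≤ t := by
        calc t ^ (i.val + j.val) ≤ t ^ 1 := pow_le_pow_of_le_one ht0.le ht1 h1
          _ = t := pow_one t
      simp only [hEdef, Matrix.of_apply, if_neg h]
      rw [abs_mul, abs_pow, abs_of_pos ht0]
      exact mul_le_mul h2 (hCb i j) (abs_nonneg _) ht0.le
  apply Matrix.PosDef.of_dotProduct_mulVec_pos
  · show (H - E)ᴴ = H - E
    ext i j
    simp only [hHdef, hEdef, Matrix.sub_apply, Matrix.conjTranspose_apply,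
      Matrix.of_apply, star_trivial]
    rw [Nat.add_comm (j.val) (i.val)]
  · intro x hx
    have hs : star x = x := by simp
    rw [hs, Matrix.sub_mulVec, dotProduct_sub]
    have hH := hquad x
    have hE := quad_bound E (t * C) hEb x
    have hE' : x ⬝ᵥ E *ᵥ x ≤ t * C * ((n:ℝ) + 1) ^ 2 * ‖x‖ ^ 2 := by
      have := (le_abs_self _).trans hE
      push_cast at this
      linarith
    have hxn : (0:ℝ) < ‖x‖ := norm_pos_iff.mpr hx
    have hpos : (0:ℝ) < (C + 1) * ((n:ℝ) + 1) ^ 2 * ‖x‖ ^ 2 := by positivity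
    have h5 : δ * ((C + 1) * ((n:ℝ) + 1) ^ 2) = μ := by
      rw [hδdef]
      field_simp
    have key : t * C * ((n:ℝ) + 1) ^ 2 * ‖x‖ ^ 2 < μ * ‖x‖ ^ 2 := by
      have h6 : t * ((C + 1) * ((n:ℝ) + 1) ^ 2 * ‖x‖ ^ 2) <
          δ * ((C + 1) * ((n:ℝ) + 1) ^ 2 * ‖x‖ ^ 2) := by
        exact mul_lt_mul_of_pos_right htδ hpos
      have h7 : δ * ((C + 1) * ((n:ℝ) + 1) ^ 2 * ‖x‖ ^ 2) = μ * ‖x‖ ^ 2 := by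
        rw [← h5]; ring
      nlinarith [h6, h7,
        mul_nonneg (mul_nonneg ht0.le (sq_nonneg ((n:ℝ) + 1))) (sq_nonneg ‖x‖)]
    linarith
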